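/- For a labeled graph G and a vertex x of degree 3 with label U, the number of dominating sets of G of size i satisfies #ds(G)[i] = #ds(G_in)[i−1] + #ds(G_opt)[i] − #ds(G_forb)[i], where G_in is obtained by deleting x, relabeling U-neighbors of x to C and deleting N-neighbors of x; G_opt is obtained by deleting x; and G_forb is obtained by deleting C-labeled neighbors of x, relabeling remaining neighbors of x to N, and deleting x. -/

import Mathlib

/-- Labels for vertices: `U` (must be dominated, may be in the set),
`N` (must be dominated, may not be in the set), `C` (no restriction on domination,
may be in the set). -/
inductive VLabel : Type
  | U | N | C
deriving DecidableEq

/-- `D` is a dominating set of the labeled graph `(G, W, ℓ)`: `D` consists of vertices of `W`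
not labeled `N`, and every vertex of `W` labeled `U` or `N` is in `D` or has a neighbor
in `D`. -/
def IsLDomSet {V : Type*} (G : SimpleGraph V) (W : Finset V) (ℓ : V → VLabel)
    (D : Finset V) : Prop :=
  D ⊆ W ∧ (∀ v ∈ D, ℓ v ≠ VLabel.N) ∧
    ∀ v ∈ W, (ℓ v = VLabel.U ∨ ℓ v = VLabel.N) → v ∈ D ∨ ∃ u ∈ D, G.Adj u v

open Classical in
/-- The number of dominating sets of size `i` of the labeled graph `(G, W, ℓ)`. -/
noncomputable def dsCount {V : Type*} [DecidableEq V] (G : SimpleGraph V) (W : Finset V)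
    (ℓ : V → VLabel) (i : ℕ) : ℕ :=
  (W.powerset.filter (fun D => IsLDomSet G W ℓ D ∧ D.card = i)).card

lemma VLabel.ne_C_iff (l : VLabel) : l ≠ VLabel.C ↔ l = VLabel.U ∨ l = VLabel.N := by
  cases l <;> simp

lemma dsCount_eq {V : Type*} [DecidableEq V] (G : SimpleGraph V) (W : Finset V)
    (ℓ : V → VLabel) (i : ℕ)
    [DecidablePred (fun D : Finset V => IsLDomSet G W ℓ D ∧ D.card = i)] :
    dsCount G W ℓ i
      = (W.powerset.filter (fun D => IsLDomSet G W ℓ D ∧ D.card = i)).card := by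
  rw [dsCount]
  congr

theorem stmt_11 {V : Type*} [Fintype V] [DecidableEq V] (G : SimpleGraph V)
    [DecidableRel G.Adj]
    (W : Finset V) (ℓ : V → VLabel) (x : V) (hx : x ∈ W) (hℓx : ℓ x = VLabel.U)
    (hdeg : ((W.erase x).filter (fun v => G.Adj x v)).card = 3)
    (i : ℕ) (hi : 1 ≤ i) :
    (dsCount G W ℓ i : ℤ) =
      (dsCount G ((W.erase x).filter (fun v => ¬(G.Adj x v ∧ ℓ v = VLabel.N)))
        (fun v => if G.Adj x v ∧ ℓ v = VLabel.U then VLabel.C else ℓ v) (i - 1) : ℤ)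
      + (dsCount G (W.erase x) ℓ i : ℤ)
      - (dsCount G ((W.erase x).filter (fun v => ¬(G.Adj x v ∧ ℓ v = VLabel.C)))
        (fun v => if G.Adj x v then VLabel.N else ℓ v) i : ℤ) := by
  classical
  set W' := W.erase x with hW'def
  set Win := W'.filter (fun v => ¬(G.Adj x v ∧ ℓ v = VLabel.N)) with hWindef
  set ℓin : V → VLabel := fun v => if G.Adj x v ∧ ℓ v = VLabel.U then VLabel.C else ℓ v
    with hℓindef
  set Wf := W'.filter (fun v => ¬(G.Adj x v ∧ ℓ v = VLabel.C)) with hWfdef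
  set ℓf : V → VLabel := fun v => if G.Adj x v then VLabel.N else ℓ v with hℓfdef
  have hxW' : x ∉ W' := Finset.notMem_erase x W
  have hW'W : W' ⊆ W := Finset.erase_subset x W
  -- Step 1: split by x ∈ D
  set S := W.powerset.filter (fun D => IsLDomSet G W ℓ D ∧ D.card = i) with hSdef
  have split1 : dsCount G W ℓ i
      = (S.filter (fun D => x ∈ D)).card + (S.filter (fun D => x ∉ D)).card := by
    rw [dsCount_eq, ← hSdef,
      Finset.card_filter_add_card_filter_not (p := fun D => x ∈ D)]
  -- Step 2: bijection for the x ∈ D part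
  have h1 : (S.filter (fun D => x ∈ D)).card = dsCount G Win ℓin (i - 1) := by
    rw [dsCount_eq]
    refine Finset.card_bij' (fun D _ => D.erase x) (fun D _ => insert x D)
      ?_ ?_ ?_ ?_
    · intro D hD
      simp only [hSdef, Finset.mem_filter, Finset.mem_powerset] at hD
      obtain ⟨⟨hDW, ⟨hsub, hN, hdom⟩, hcard⟩, hxD⟩ := hD
      simp only [Finset.mem_filter, Finset.mem_powerset]
      have hsub' : D.erase x ⊆ Win := by
        intro v hv
        obtain ⟨hne, hvD⟩ := Finset.mem_erase.mp hv
        simp only [hWindef, Finset.mem_filter, hW'def, Finset.mem_erase]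
        exact ⟨⟨hne, hDW hvD⟩, fun h => hN v hvD h.2⟩
      refine ⟨hsub', ⟨hsub', ?_, ?_⟩, ?_⟩
      · intro v hv
        obtain ⟨hne, hvD⟩ := Finset.mem_erase.mp hv
        by_cases h : G.Adj x v ∧ ℓ v = VLabel.U
        · simp [hℓindef, h]
        · simpa [hℓindef, h] using hN v hvD
      · intro v hv hlab
        have hvWin := hv
        simp only [hWindef, Finset.mem_filter, hW'def, Finset.mem_erase] at hvWin
        obtain ⟨⟨hne, hvW⟩, hnotN⟩ := hvWin
        have hnotU : ¬(G.Adj x v ∧ ℓ v = VLabel.U) := by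
          intro h
          simp [hℓindef, h] at hlab
        have hlab' : ℓ v = VLabel.U ∨ ℓ v = VLabel.N := by
          simpa [hℓindef, hnotU] using hlab
        have hnadj : ¬ G.Adj x v := by
          intro hadj
          rcases hlab' with h | h
          · exact hnotU ⟨hadj, h⟩
          · exact hnotN ⟨hadj, h⟩
        rcases hdom v hvW hlab' with h | ⟨u, huD, huv⟩
        · exact Or.inl (Finset.mem_erase.mpr ⟨hne, h⟩)
        · refine Or.inr ⟨u, Finset.mem_erase.mpr ⟨?_, huD⟩, huv⟩
          rintro rfl; exact hnadj huv
      · rw [Finset.card_erase_of_mem hxD, hcard]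
    · intro D hD
      simp only [Finset.mem_filter, Finset.mem_powerset] at hD
      obtain ⟨hDWin, ⟨hsub, hN, hdom⟩, hcard⟩ := hD
      have hWinW' : Win ⊆ W' := Finset.filter_subset _ _
      have hxD : x ∉ D := fun h => hxW' (hWinW' (hDWin h))
      simp only [hSdef, Finset.mem_filter, Finset.mem_powerset]
      have hDW : insert x D ⊆ W :=
        Finset.insert_subset hx (fun v hv => hW'W (hWinW' (hDWin hv)))
      refine ⟨⟨hDW, ⟨hDW, ?_, ?_⟩, ?_⟩, Finset.mem_insert_self x D⟩
      · intro v hv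
        rcases Finset.mem_insert.mp hv with rfl | hvD
        · simp [hℓx]
        · have := hN v hvD
          by_cases h : G.Adj x v ∧ ℓ v = VLabel.U
          · simp [h.2]
          · simpa [hℓindef, h] using this
      · intro v hvW hlab
        by_cases hvx : v = x
        · subst hvx; exact Or.inl (Finset.mem_insert_self v D)
        by_cases hadj : G.Adj x v
        · exact Or.inr ⟨x, Finset.mem_insert_self x D, hadj⟩
        · have hvWin : v ∈ Win := by
            simp only [hWindef, Finset.mem_filter, hW'def, Finset.mem_erase]
            exact ⟨⟨hvx, hvW⟩, fun h => hadj h.1⟩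
          have hlab' : ℓin v = VLabel.U ∨ ℓin v = VLabel.N := by
            simpa [hℓindef, hadj] using hlab
          rcases hdom v hvWin hlab' with h | ⟨u, huD, huv⟩
          · exact Or.inl (Finset.mem_insert_of_mem h)
          · exact Or.inr ⟨u, Finset.mem_insert_of_mem huD, huv⟩
      · rw [Finset.card_insert_of_notMem hxD, hcard]
        omega
    · intro D hD
      simp only [hSdef, Finset.mem_filter, Finset.mem_powerset] at hD
      exact Finset.insert_erase hD.2
    · intro D hD
      simp only [Finset.mem_filter, Finset.mem_powerset] at hD
      have hxD : x ∉ D := fun h => hxW' ((Finset.filter_subset _ _) (hD.1 h))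
      exact Finset.erase_insert hxD
  -- Step 3: split dominating sets of G_opt by whether x is dominated
  set T := W'.powerset.filter (fun D => IsLDomSet G W' ℓ D ∧ D.card = i) with hTdef
  have split2 : dsCount G W' ℓ i
      = (T.filter (fun D => ∃ u ∈ D, G.Adj u x)).card
        + (T.filter (fun D => ¬ ∃ u ∈ D, G.Adj u x)).card := by
    rw [dsCount_eq, ← hTdef,
      Finset.card_filter_add_card_filter_not (p := fun D => ∃ u ∈ D, G.Adj u x)]
  have h2 : S.filter (fun D => x ∉ D) = T.filter (fun D => ∃ u ∈ D, G.Adj u x) := by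
    ext D
    simp only [hSdef, hTdef, Finset.mem_filter, Finset.mem_powerset]
    constructor
    · rintro ⟨⟨hDW, ⟨hsub, hN, hdom⟩, hcard⟩, hxD⟩
      have hDW' : D ⊆ W' := fun v hv =>
        Finset.mem_erase.mpr ⟨fun h => hxD (h ▸ hv), hDW hv⟩
      refine ⟨⟨hDW', ⟨hDW', hN, fun v hv hlab => hdom v (hW'W hv) hlab⟩, hcard⟩, ?_⟩
      rcases hdom x hx (Or.inl hℓx) with h | h
      · exact absurd h hxD
      · exact h
    · rintro ⟨⟨hDW', ⟨hsub, hN, hdom⟩, hcard⟩, hex⟩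
      have hxD : x ∉ D := fun h => hxW' (hDW' h)
      refine ⟨⟨hDW'.trans hW'W, ⟨hDW'.trans hW'W, hN, ?_⟩, hcard⟩, hxD⟩
      intro v hvW hlab
      by_cases hvx : v = x
      · subst hvx; exact Or.inr hex
      · exact hdom v (Finset.mem_erase.mpr ⟨hvx, hvW⟩) hlab
  have h3 : (T.filter (fun D => ¬ ∃ u ∈ D, G.Adj u x)).card = dsCount G Wf ℓf i := by
    rw [dsCount_eq]
    congr 1
    ext D
    simp only [hTdef, Finset.mem_filter, Finset.mem_powerset]
    constructor
    · rintro ⟨⟨hDW', ⟨hsub, hN, hdom⟩, hcard⟩, hnd⟩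
      push_neg at hnd
      have hnadj : ∀ v ∈ D, ¬ G.Adj x v := fun v hv h => hnd v hv (G.adj_symm h)
      have hDWf : D ⊆ Wf := by
        intro v hv
        simp only [hWfdef, Finset.mem_filter]
        exact ⟨hDW' hv, fun h => hnadj v hv h.1⟩
      refine ⟨hDWf, ⟨hDWf, ?_, ?_⟩, hcard⟩
      · intro v hv
        simpa [hℓfdef, hnadj v hv] using hN v hv
      · intro v hv hlab
        simp only [hWfdef, Finset.mem_filter] at hv
        obtain ⟨hvW', hnot⟩ := hv
        by_cases hadj : G.Adj x v
        · have hℓv : ℓ v = VLabel.U ∨ ℓ v = VLabel.N :=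
            (VLabel.ne_C_iff _).mp (fun h => hnot ⟨hadj, h⟩)
          exact hdom v hvW' hℓv
        · exact hdom v hvW' (by simpa [hℓfdef, hadj] using hlab)
    · rintro ⟨hDWf, ⟨hsub, hN, hdom⟩, hcard⟩
      have hWfW' : Wf ⊆ W' := Finset.filter_subset _ _
      have hnadj : ∀ v ∈ D, ¬ G.Adj x v := by
        intro v hv h
        exact hN v hv (by simp [hℓfdef, h])
      refine ⟨⟨hDWf.trans hWfW', ⟨hDWf.trans hWfW', ?_, ?_⟩, hcard⟩, ?_⟩
      · intro v hv
        have := hN v hv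
        simpa [hℓfdef, hnadj v hv] using this
      · intro v hvW' hlab
        have hℓC : ℓ v ≠ VLabel.C := by
          rcases hlab with h | h <;> simp [h]
        have hvWf : v ∈ Wf := by
          simp only [hWfdef, Finset.mem_filter]
          exact ⟨hvW', fun h => hℓC h.2⟩
        have hlab' : ℓf v = VLabel.U ∨ ℓf v = VLabel.N := by
          by_cases hadj : G.Adj x v <;> simp [hℓfdef, hadj, hlab]
        exact hdom v hvWf hlab'
      · rintro ⟨u, huD, hadj⟩
        exact hnadj u huD (G.adj_symm hadj)
  have e2 : dsCount G W' ℓ i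
      = (S.filter (fun D => x ∉ D)).card + dsCount G Wf ℓf i := by
    rw [split2, h2, h3]
  omega
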